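/- Let R(z) = √(1 − z²) and, for fixed b ∈ [0, 2] and d > 0, let f(z) = (R(z) + R(z − b))/d and G(z) = arcsin(f(z)), defined for b − 1 ≤ z ≤ 1 (assuming f(z) ≤ 1 throughout). Then G is strictly concave on the interval (b/2, 1), i.e., G''(z) < 0 there (wherever f(z) < 1). -/

import Mathlib

open Real Topology


noncomputable def AA (b z : ℝ) : ℝ := Real.sqrt (1 - z^2) + Real.sqrt (1 - (z-b)^2)
noncomputable def AA1 (b z : ℝ) : ℝ := -z / Real.sqrt (1 - z^2) + -(z-b) / Real.sqrt (1 - (z-b)^2)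
noncomputable def AA2 (b z : ℝ) : ℝ := -1 / (Real.sqrt (1 - z^2))^3 + -1 / (Real.sqrt (1 - (z-b)^2))^3
noncomputable def AA3 (b z : ℝ) : ℝ := -3*z / (Real.sqrt (1 - z^2))^5 + -3*(z-b) / (Real.sqrt (1 - (z-b)^2))^5

lemma D1 {t : ℝ} (h : 0 < 1 - t^2) :
    HasDerivAt (fun x => Real.sqrt (1 - x^2)) (-t / Real.sqrt (1 - t^2)) t := by
  have hs : Real.sqrt (1 - t^2) ≠ 0 := (Real.sqrt_pos.mpr h).ne'
  have hu : HasDerivAt (fun x : ℝ => 1 - x^2) (-(2*t)) t := by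
    simpa using ((hasDerivAt_pow 2 t).const_sub 1)
  have := (Real.hasDerivAt_sqrt h.ne').comp t hu
  refine this.congr_deriv (Eq.symm ?_)
  field_simp

lemma D2 {t : ℝ} (h : 0 < 1 - t^2) :
    HasDerivAt (fun x => -x / Real.sqrt (1 - x^2)) (-1 / (Real.sqrt (1 - t^2))^3) t := by
  have hsp : 0 < Real.sqrt (1 - t^2) := Real.sqrt_pos.mpr h
  have hs : Real.sqrt (1 - t^2) ≠ 0 := hsp.ne'
  have hsq : Real.sqrt (1 - t^2) ^ 2 = 1 - t^2 := Real.sq_sqrt h.le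
  have hnum : HasDerivAt (fun x : ℝ => -x) (-1) t := (hasDerivAt_id t).neg
  have := hnum.div (D1 h) hs
  refine this.congr_deriv (Eq.symm ?_)
  field_simp
  nlinarith [hsq]

lemma D3 {t : ℝ} (h : 0 < 1 - t^2) :
    HasDerivAt (fun x => -1 / (Real.sqrt (1 - x^2))^3) (-3*t / (Real.sqrt (1 - t^2))^5) t := by
  have hsp : 0 < Real.sqrt (1 - t^2) := Real.sqrt_pos.mpr h
  have hs : Real.sqrt (1 - t^2) ≠ 0 := hsp.ne'
  have hsq : Real.sqrt (1 - t^2) ^ 2 = 1 - t^2 := Real.sq_sqrt h.le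
  have hden : HasDerivAt (fun x => (Real.sqrt (1 - x^2))^3)
      (3 * (Real.sqrt (1 - t^2))^2 * (-t / Real.sqrt (1 - t^2))) t := by
    exact (D1 h).pow 3
  have := (hasDerivAt_const t (-1)).div hden (by positivity)
  refine this.congr_deriv (Eq.symm ?_)
  field_simp
  linear_combination (0:ℝ) * hsq

section AAderiv
variable {b z : ℝ}

lemma DAA (h1 : 0 < 1 - z^2) (h2 : 0 < 1 - (z-b)^2) :
    HasDerivAt (AA b) (AA1 b z) z := by
  have hshift : HasDerivAt (fun x : ℝ => x - b) 1 z := (hasDerivAt_id z).sub_const b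
  have h2' : HasDerivAt (fun x => Real.sqrt (1 - (x - b)^2))
      (-(z-b) / Real.sqrt (1 - (z-b)^2)) z := by
    have h := (D1 h2).comp z hshift
    rw [mul_one] at h
    exact h
  exact (D1 h1).add h2'

lemma DAA1 (h1 : 0 < 1 - z^2) (h2 : 0 < 1 - (z-b)^2) :
    HasDerivAt (AA1 b) (AA2 b z) z := by
  have hshift : HasDerivAt (fun x : ℝ => x - b) 1 z := (hasDerivAt_id z).sub_const b
  have h2' : HasDerivAt (fun x => -(x - b) / Real.sqrt (1 - (x - b)^2))
      (-1 / (Real.sqrt (1 - (z-b)^2))^3) z := by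
    have h := (D2 h2).comp z hshift
    rw [mul_one] at h
    exact h
  exact (D2 h1).add h2'

lemma DAA2 (h1 : 0 < 1 - z^2) (h2 : 0 < 1 - (z-b)^2) :
    HasDerivAt (AA2 b) (AA3 b z) z := by
  have hshift : HasDerivAt (fun x : ℝ => x - b) 1 z := (hasDerivAt_id z).sub_const b
  have h2' : HasDerivAt (fun x => -1 / (Real.sqrt (1 - (x - b)^2))^3)
      (-3*(z-b) / (Real.sqrt (1 - (z-b)^2))^5) z := by
    have h := (D3 h2).comp z hshift
    rw [mul_one] at h
    exact h
  exact (D3 h1).add h2'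

end AAderiv

/-- key algebraic positivity: x/s(x)^k + y/s(y)^k > 0 when 0<x<1, -x<y≤x -/
lemma keypos (k : ℕ) {x y : ℝ} (hx0 : 0 < x) (hx1 : x < 1) (hyx : -x < y) (hyx' : y ≤ x) :
    0 < x / (Real.sqrt (1 - x^2))^k + y / (Real.sqrt (1 - y^2))^k := by
  have hx2 : 0 < 1 - x^2 := by nlinarith
  have hy2 : 0 < 1 - y^2 := by nlinarith
  have hsx : 0 < (Real.sqrt (1 - x^2))^k := pow_pos (Real.sqrt_pos.mpr hx2) k
  have hsy : 0 < (Real.sqrt (1 - y^2))^k := pow_pos (Real.sqrt_pos.mpr hy2) k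
  rcases le_or_gt 0 y with hy | hy
  · have : 0 < x / (Real.sqrt (1 - x^2))^k := div_pos hx0 hsx
    have : 0 ≤ y / (Real.sqrt (1 - y^2))^k := div_nonneg hy hsy.le
    linarith [div_pos hx0 hsx]
  · have hsle : (Real.sqrt (1 - x^2))^k ≤ (Real.sqrt (1 - y^2))^k := by
      apply pow_le_pow_left₀ (Real.sqrt_nonneg _)
      apply Real.sqrt_le_sqrt; nlinarith
    have e1 : (-y) / (Real.sqrt (1 - y^2))^k ≤ (-y) / (Real.sqrt (1 - x^2))^k :=
      div_le_div_of_nonneg_left (by linarith) hsx hsle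
    have e2 : (-y) / (Real.sqrt (1 - x^2))^k < x / (Real.sqrt (1 - x^2))^k := by
      gcongr
      linarith
    linarith [lt_of_le_of_lt e1 e2, neg_div ((Real.sqrt (1 - y^2))^k) y]

noncomputable def HF (b d z : ℝ) : ℝ :=
  AA2 b z * (d^2 - (AA b z)^2) + AA b z * (AA1 b z)^2

lemma DHF {b d z : ℝ} (h1 : 0 < 1 - z^2) (h2 : 0 < 1 - (z-b)^2) :
    HasDerivAt (HF b d) (AA3 b z * (d^2 - (AA b z)^2) + (AA1 b z)^3) z := by
  have hA := DAA (b := b) h1 h2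
  have hA1 := DAA1 (b := b) h1 h2
  have hA2 := DAA2 (b := b) h1 h2
  have := (hA2.mul (((hasDerivAt_const z (d^2)).sub (hA.pow 2)))).add (hA.mul (hA1.pow 2))
  refine this.congr_deriv (Eq.symm ?_)
  simp only [Pi.sub_apply, Pi.pow_apply]
  ring

lemma AA_pos {b z : ℝ} (h1 : 0 < 1 - z^2) : 0 < AA b z := by
  have := Real.sqrt_pos.mpr h1
  have := Real.sqrt_nonneg (1 - (z-b)^2)
  unfold AA; linarith

lemma AA1_neg {b z : ℝ} (hb0 : 0 ≤ b) (hz : b/2 < z) (hz1 : z < 1) : AA1 b z < 0 := by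
  have h := keypos 1 (x := z) (y := z - b) (by linarith) hz1 (by linarith) (by linarith)
  simp only [pow_one] at h
  unfold AA1
  have e1 : -z / Real.sqrt (1 - z^2) = -(z / Real.sqrt (1 - z^2)) := neg_div _ _
  have e2 : -(z-b) / Real.sqrt (1 - (z-b)^2) = -((z-b) / Real.sqrt (1 - (z-b)^2)) :=
    neg_div _ _
  linarith

lemma AA3_neg {b z : ℝ} (hb0 : 0 ≤ b) (hz : b/2 < z) (hz1 : z < 1) : AA3 b z < 0 := by
  have h := keypos 5 (x := z) (y := z - b) (by linarith) hz1 (by linarith) (by linarith)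
  unfold AA3
  have e1 : -3*z / (Real.sqrt (1 - z^2))^5 = -3*(z / (Real.sqrt (1 - z^2))^5) := by ring
  have e2 : -3*(z-b) / (Real.sqrt (1 - (z-b)^2))^5
      = -3*((z-b) / (Real.sqrt (1 - (z-b)^2))^5) := by ring
  linarith

lemma AA2_neg {b z : ℝ} (h1 : 0 < 1 - z^2) (h2 : 0 < 1 - (z-b)^2) : AA2 b z < 0 := by
  have s1 : 0 < (Real.sqrt (1 - z^2))^3 := pow_pos (Real.sqrt_pos.mpr h1) 3
  have s2 : 0 < (Real.sqrt (1 - (z-b)^2))^3 := pow_pos (Real.sqrt_pos.mpr h2) 3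
  have := div_pos (by norm_num : (0:ℝ) < 1) s1
  have := div_pos (by norm_num : (0:ℝ) < 1) s2
  unfold AA2
  have e1 : -1 / (Real.sqrt (1 - z^2))^3 = -(1 / (Real.sqrt (1 - z^2))^3) := neg_div _ _
  have e2 : -1 / (Real.sqrt (1 - (z-b)^2))^3 = -(1 / (Real.sqrt (1 - (z-b)^2))^3) := neg_div _ _
  linarith

lemma AA1_mid (b : ℝ) : AA1 b (b/2) = 0 := by
  unfold AA1
  have e : b/2 - b = -(b/2) := by ring
  rw [e, neg_sq]
  ring

lemma rad1 {b w : ℝ} (hb0 : 0 ≤ b) (hw : b/2 ≤ w) (hw1 : w < 1) : 0 < 1 - w^2 := by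
  nlinarith

lemma rad2 {b w : ℝ} (hb0 : 0 ≤ b) (hb2 : b < 2) (hw : b/2 ≤ w) (hw1 : w < 1) :
    0 < 1 - (w-b)^2 := by nlinarith

lemma HF_neg {b d : ℝ} (hb0 : 0 ≤ b) (hd : 0 < d)
    (hfle : ∀ w ∈ Set.Icc (b-1) 1, AA b w ≤ d) {z : ℝ} (hz : b/2 < z) (hz1 : z < 1) :
    HF b d z < 0 := by
  have hb2 : b < 2 := by linarith
  have hAled : ∀ w, b/2 ≤ w → w ≤ 1 → d^2 - (AA b w)^2 ≥ 0 := by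
    intro w hw hw1
    have hA := hfle w ⟨by linarith, hw1⟩
    have hApos : 0 ≤ AA b w := by
      unfold AA; positivity
    nlinarith
  have hanti : StrictAntiOn (HF b d) (Set.Ico (b/2) 1) := by
    apply strictAntiOn_of_deriv_neg (convex_Ico _ _)
    · intro w hw
      exact (DHF (rad1 hb0 hw.1 hw.2) (rad2 hb0 hb2 hw.1 hw.2)).continuousAt.continuousWithinAt
    · intro w hw
      rw [interior_Ico] at hw
      rw [(DHF (rad1 hb0 hw.1.le hw.2) (rad2 hb0 hb2 hw.1.le hw.2)).deriv]
      have h3 := AA3_neg hb0 hw.1 hw.2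
      have h1 := AA1_neg hb0 hw.1 hw.2
      have hD := hAled w hw.1.le hw.2.le
      have hcube : (AA1 b w)^3 < 0 := Odd.pow_neg ⟨1, by norm_num⟩ h1
      nlinarith [hcube]
  have hmid : HF b d (b/2) ≤ 0 := by
    have hA2 := AA2_neg (rad1 hb0 (le_refl (b/2)) (by linarith)) (b := b)
      (rad2 hb0 hb2 (le_refl (b/2)) (by linarith))
    have hD := hAled (b/2) (le_refl _) (by linarith)
    rw [HF, AA1_mid]
    nlinarith
  have := hanti ⟨le_refl _, by linarith⟩ ⟨hz.le, hz1⟩ hz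
  linarith

/-- with `R z = √(1 - z²)`, `f z = (R z + R (z - b)) / d` and
`G z = arcsin (f z)` (for `0 ≤ b ≤ 2`, `d > 0`, and `f ≤ 1` on `[b-1, 1]`), the function
`G` is strictly concave on `(b/2, 1)`: its second derivative is negative wherever
`f z < 1`. -/
theorem G_second_deriv_neg (b d : ℝ) (hb0 : 0 ≤ b) (hb2 : b ≤ 2) (hd : 0 < d)
    (f G : ℝ → ℝ)
    (hf : ∀ z, f z = (Real.sqrt (1 - z ^ 2) + Real.sqrt (1 - (z - b) ^ 2)) / d)
    (hG : ∀ z, G z = Real.arcsin (f z))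
    (hf1 : ∀ z ∈ Set.Icc (b - 1) 1, f z ≤ 1) :
    ∀ z, b / 2 < z → z < 1 → f z < 1 → deriv (deriv G) z < 0 := by
  intro z hz hz1 hfz
  have hb2' : b < 2 := by linarith
  have hfeq : ∀ w, f w = AA b w / d := fun w => by rw [hf]; rfl
  have hGeq : G = fun w => Real.arcsin (AA b w / d) := funext fun w => by rw [hG, hfeq]
  have hAzd : AA b z < d := by
    have := hfz; rw [hfeq z] at this; exact (div_lt_one hd).mp this
  have hfle : ∀ w ∈ Set.Icc (b-1) 1, AA b w ≤ d := fun w hw => by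
    have := hf1 w hw; rw [hfeq w] at this; exact (div_le_one hd).mp this
  have hAcont : Continuous (AA b) := by
    unfold AA; fun_prop
  set U : Set ℝ := Set.Ioo (b/2) 1 ∩ (AA b) ⁻¹' (Set.Iio d) with hU_def
  have hUopen : IsOpen U := isOpen_Ioo.inter (isOpen_Iio.preimage hAcont)
  have hzU : z ∈ U := ⟨⟨hz, hz1⟩, hAzd⟩
  have hUnhds : U ∈ 𝓝 z := hUopen.mem_nhds hzU
  have hGderiv : ∀ w ∈ U,
      HasDerivAt G (AA1 b w / d * (1 / Real.sqrt (1 - (AA b w / d)^2))) w := by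
    intro w hw
    obtain ⟨⟨hw1, hw2⟩, hw3⟩ := hw
    have h1 := rad1 hb0 hw1.le hw2
    have h2 := rad2 hb0 hb2' hw1.le hw2
    have hfw_pos : 0 < AA b w / d := div_pos (AA_pos h1) hd
    have hfw_lt : AA b w / d < 1 := (div_lt_one hd).mpr hw3
    have hinner : HasDerivAt (fun w => AA b w / d) (AA1 b w / d) w := (DAA h1 h2).div_const d
    have harc := Real.hasDerivAt_arcsin
      (by linarith : (-1:ℝ) < AA b w / d).ne' hfw_lt.ne
    have := harc.comp w hinner
    rw [hGeq]
    refine this.congr_deriv (Eq.symm ?_)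
    ring
  have hev : deriv G =ᶠ[𝓝 z]
      fun w => AA1 b w / d * (1 / Real.sqrt (1 - (AA b w / d)^2)) :=
    Filter.eventually_of_mem hUnhds (fun w hw => (hGderiv w hw).deriv)
  rw [Filter.EventuallyEq.deriv_eq hev]
  have h1 := rad1 hb0 hz.le hz1
  have h2 := rad2 hb0 hb2' hz.le hz1
  set s := Real.sqrt (1 - (AA b z / d)^2) with hs_def
  have hq : 0 < 1 - (AA b z / d)^2 := by
    have hfz1 : AA b z / d < 1 := (div_lt_one hd).mpr hAzd
    have hfz0 : 0 < AA b z / d := div_pos (AA_pos h1) hd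
    nlinarith
  have hspos : 0 < s := Real.sqrt_pos.mpr hq
  have hssq : s^2 = 1 - (AA b z / d)^2 := Real.sq_sqrt hq.le
  have hAd : HasDerivAt (fun w => AA b w / d) (AA1 b z / d) z := (DAA h1 h2).div_const d
  have hu : HasDerivAt (fun w => 1 - (AA b w / d)^2)
      (-(2 * (AA b z / d)^1 * (AA1 b z / d))) z := by
    simpa using (hAd.pow 2).const_sub 1
  have hsd : HasDerivAt (fun w => Real.sqrt (1 - (AA b w / d)^2))
      (1 / (2*s) * (-(2 * (AA b z/d)^1 * (AA1 b z/d)))) z :=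
    (Real.hasDerivAt_sqrt hq.ne').comp z hu
  have hinv : HasDerivAt (fun w => 1 / Real.sqrt (1 - (AA b w / d)^2))
      ((0 * s - 1 * (1/(2*s) * (-(2*(AA b z/d)^1*(AA1 b z/d))))) / s^2) z :=
    (hasDerivAt_const z 1).div hsd hspos.ne'
  have hP : HasDerivAt (fun w => AA1 b w / d * (1 / Real.sqrt (1 - (AA b w / d)^2)))
      (HF b d z / (d^3 * s^3)) z := by
    have := ((DAA1 h1 h2).div_const d).mul hinv
    refine this.congr_deriv (Eq.symm ?_)
    rw [← hs_def, HF]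
    have hds : d^2 * s^2 = d^2 - AA b z^2 := by
      rw [hssq]; field_simp
    field_simp
    linear_combination (-AA2 b z) * hds
  rw [hP.deriv]
  have hHF := HF_neg hb0 hd hfle hz hz1
  have hden : 0 < d^3 * s^3 := by positivity
  exact div_neg_of_neg_of_pos hHF hden
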